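/- Let r be a positive integer, let G' be a correctly gadgeted graph for parameter r, and let χ : V(G') → ℕ be a labeling that is a distance-2 coloring and is edge-consistent in every r-gball. Let v be an original vertex of G' and let w be an outer vertex adjacent to v. Then no inner vertex u in gball_r(v) satisfies χ(u) = χ(w). -/

import Mathlib

open scoped ENNReal

namespace LCLGadget

/-- Adjacency relation (one direction) of the A-gadget, on vertex indices `0,…,5`
representing the paper's vertices `1,…,6`. -/
def AAdj (i j : Fin 6) : Prop :=
  (i, j) ∈ ([(0,1),(0,2),(1,2),(1,3),(2,4),(3,4),(3,5),(4,5)] : List (Fin 6 × Fin 6))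

variable {V : Type} [LinearOrder V]

/-- The gadget vertices of the gadgeted graph `gadget(G, x)`: a vertex `⟨(a,b,i,j), _⟩`
is vertex `j` of the `i`-th A-gadget on the expanded edge replacing the edge `{a,b}`
(oriented so that `a < b`). -/
abbrev GadgetAux (G : SimpleGraph V) (x : Sym2 V → ℕ) : Type :=
  {p : V × V × ℕ × Fin 6 //
    p.1 < p.2.1 ∧ G.Adj p.1 p.2.1 ∧ p.2.2.1 < x s(p.1, p.2.1)}

/-- Vertices of the gadgeted graph: original vertices (`Sum.inl`) and gadget
vertices (`Sum.inr`). -/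
abbrev GadgetVert (G : SimpleGraph V) (x : Sym2 V → ℕ) : Type :=
  V ⊕ GadgetAux G x

/-- Base adjacency relation of the gadgeted graph (to be symmetrized):
vertex `0` (paper's `1`) of the first gadget is joined to the smaller endpoint,
vertex `5` (paper's `6`) of the last gadget is joined to the larger endpoint,
within one gadget the A-gadget edges are used, and consecutive gadgets of a chain
are joined by an edge from vertex `5` to vertex `0`. -/
def gadgetRel (G : SimpleGraph V) (x : Sym2 V → ℕ) :
    GadgetVert G x → GadgetVert G x → Prop
  | Sum.inl sv, Sum.inr ⟨⟨a, b, i, j⟩, _⟩ =>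
      (sv = a ∧ i = 0 ∧ j = 0) ∨ (sv = b ∧ i = x s(a, b) - 1 ∧ j = 5)
  | Sum.inr ⟨⟨a, b, i, j⟩, _⟩, Sum.inr ⟨⟨a', b', i', j'⟩, _⟩ =>
      a = a' ∧ b = b' ∧ ((i = i' ∧ AAdj j j') ∨ (i' = i + 1 ∧ j = 5 ∧ j' = 0))
  | _, _ => False

/-- The gadgeted graph `G' = gadget(G, x)`. -/
def gadgetGraph (G : SimpleGraph V) (x : Sym2 V → ℕ) : SimpleGraph (GadgetVert G x) :=
  SimpleGraph.fromRel (gadgetRel G x)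

/-- Weight of a (potential) edge of the gadgeted graph: `1/2` if it is incident to an
original vertex, `0` otherwise. -/
noncomputable def wt (G : SimpleGraph V) (x : Sym2 V → ℕ) :
    GadgetVert G x → GadgetVert G x → ℝ≥0∞
  | Sum.inl _, _ => 1/2
  | _, Sum.inl _ => 1/2
  | _, _ => 0

/-- The gadgeted distance `gdist(u,v)`: the minimum total weight of a path
from `u` to `v` in the gadgeted graph. -/
noncomputable def gdist (G : SimpleGraph V) (x : Sym2 V → ℕ) (u v : GadgetVert G x) : ℝ≥0∞ :=
  ⨅ p : (gadgetGraph G x).Walk u v,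
    (p.darts.map fun d => wt G x d.toProd.1 d.toProd.2).sum

/-- Membership of a vertex `u` in the `r`-gball around `c`. -/
def inGball (G : SimpleGraph V) (x : Sym2 V → ℕ) (r : ℕ) (c u : GadgetVert G x) : Prop :=
  gdist G x c u ≤ (r : ℝ≥0∞)

/-- `u` is an original vertex of the gadgeted graph. -/
def IsOriginal (G : SimpleGraph V) (x : Sym2 V → ℕ) (u : GadgetVert G x) : Prop :=
  ∃ v : V, u = Sum.inl v

/-- `u` is an outer vertex: a gadget vertex adjacent to an original vertex. -/
def IsOuter (G : SimpleGraph V) (x : Sym2 V → ℕ) (u : GadgetVert G x) : Prop :=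
  (∃ p, u = Sum.inr p) ∧ ∃ w, IsOriginal G x w ∧ (gadgetGraph G x).Adj u w

/-- `u` is an inner vertex: a gadget vertex not adjacent to any original vertex. -/
def IsInner (G : SimpleGraph V) (x : Sym2 V → ℕ) (u : GadgetVert G x) : Prop :=
  (∃ p, u = Sum.inr p) ∧ ¬ ∃ w, IsOriginal G x w ∧ (gadgetGraph G x).Adj u w

/-- `G` is a 3-regular graph. -/
def ThreeRegular (G : SimpleGraph V) : Prop :=
  ∀ v : V, (G.neighborSet v).ncard = 3

/-- The edge labeling `x` takes positive values on all edges. -/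
def PosLabels (G : SimpleGraph V) (x : Sym2 V → ℕ) : Prop :=
  ∀ e ∈ G.edgeSet, 0 < x e

/-- `x` is a distance-`2r` edge coloring of `G`: any two distinct edges of `G` at
distance at most `2r` from each other receive distinct labels. -/
def DistEdgeColoring (G : SimpleGraph V) (x : Sym2 V → ℕ) (r : ℕ) : Prop :=
  ∀ e ∈ G.edgeSet, ∀ f ∈ G.edgeSet, e ≠ f →
    (∃ a ∈ e, ∃ b ∈ f, G.edist a b ≤ (2 * r : ℕ)) → x e ≠ x f

/-- The gadgeted graph `gadget(G,x)` is correctly gadgeted for parameter `r`. -/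
def CorrectlyGadgeted (G : SimpleGraph V) (x : Sym2 V → ℕ) (r : ℕ) : Prop :=
  ThreeRegular G ∧ PosLabels G x ∧ DistEdgeColoring G x r

/-- `χ` is a distance-2 coloring of the gadgeted graph:
it is injective on `{v} ∪ N(v)` for every vertex `v`. -/
def Dist2Coloring (G : SimpleGraph V) (x : Sym2 V → ℕ) (χ : GadgetVert G x → ℕ) : Prop :=
  ∀ v : GadgetVert G x, Set.InjOn χ (insert v ((gadgetGraph G x).neighborSet v))

/-- `χ` is edge-consistent in every `r`-gball: whenever `{v,u}` is an edge and
`v' ∈ gball_r(v)` has `χ(v') = χ(v)`, there is a neighbor `u'` of `v'` with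
`χ(u') = χ(u)`. -/
def EdgeConsistent (G : SimpleGraph V) (x : Sym2 V → ℕ) (r : ℕ)
    (χ : GadgetVert G x → ℕ) : Prop :=
  ∀ v u : GadgetVert G x, (gadgetGraph G x).Adj v u →
    ∀ v', inGball G x r v v' → χ v' = χ v →
      ∃ u', (gadgetGraph G x).Adj v' u' ∧ χ u' = χ u

/-- `u` lies on a triangle (cycle of length 3) of the gadgeted graph. -/
def OnTriangle (G : SimpleGraph V) (x : Sym2 V → ℕ) (u : GadgetVert G x) : Prop :=
  ∃ a b, (gadgetGraph G x).Adj u a ∧ (gadgetGraph G x).Adj u b ∧ (gadgetGraph G x).Adj a b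

end LCLGadget



namespace LCLGadgetThms
open LCLGadget SimpleGraph Sum

variable {V : Type} [LinearOrder V] {G : SimpleGraph V} {x : Sym2 V → ℕ}

/-- weight of a walk -/
noncomputable def wgt {u v : GadgetVert G x} (p : (gadgetGraph G x).Walk u v) : ℝ≥0∞ :=
  (p.darts.map fun d => wt G x d.toProd.1 d.toProd.2).sum

lemma gdist_eq (u v : GadgetVert G x) : gdist G x u v = ⨅ p : (gadgetGraph G x).Walk u v, wgt p := rfl

lemma wt_comm (a b : GadgetVert G x) : wt G x a b = wt G x b a := by
  cases a <;> cases b <;> rfl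

lemma wt_inr_inr (a b : GadgetAux G x) : wt G x (inr a) (inr b) = 0 := rfl

lemma wt_half (a : GadgetVert G x) (b : V) : wt G x a (inl b) = 2⁻¹ := by
  cases a <;> simp [wt, one_div]

lemma wt_half' (a : GadgetVert G x) (b : V) : wt G x (inl b) a = 2⁻¹ := by
  cases a <;> simp [wt, one_div]

lemma not_adj_inl_inl (a b : V) : ¬ (gadgetGraph G x).Adj (inl a) (inl b) := by
  rw [gadgetGraph, SimpleGraph.fromRel_adj]
  rintro ⟨-, h | h⟩ <;> exact h.elim

lemma gdist_le_wgt {u v : GadgetVert G x} (p : (gadgetGraph G x).Walk u v) :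
    gdist G x u v ≤ wgt p := iInf_le _ p

lemma gdist_le_wt {u v : GadgetVert G x} (h : (gadgetGraph G x).Adj u v) :
    gdist G x u v ≤ wt G x u v := by
  refine le_trans (gdist_le_wgt (SimpleGraph.Walk.cons h SimpleGraph.Walk.nil)) ?_
  simp [wgt]

lemma gdist_triangle (u v w : GadgetVert G x) :
    gdist G x u w ≤ gdist G x u v + gdist G x v w := by
  rw [gdist_eq u v, gdist_eq v w, gdist_eq u w, ENNReal.iInf_add]
  refine le_iInf fun p => ?_
  rw [ENNReal.add_iInf]
  refine le_iInf fun q => ?_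
  refine iInf_le_of_le (p.append q) (le_of_eq ?_)
  simp [wgt, SimpleGraph.Walk.darts_append]

lemma wgt_reverse {u v : GadgetVert G x} (p : (gadgetGraph G x).Walk u v) :
    wgt p.reverse = wgt p := by
  simp only [wgt, SimpleGraph.Walk.darts_reverse, List.map_reverse, List.sum_reverse,
    List.map_map]
  congr 1
  refine List.map_congr_left fun d _ => ?_
  simp [Function.comp, SimpleGraph.Dart.symm_toProd, wt_comm]

lemma gdist_symm (u v : GadgetVert G x) : gdist G x u v = gdist G x v u := by
  have h : ∀ a b : GadgetVert G x, gdist G x a b ≤ gdist G x b a := by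
    intro a b
    rw [gdist_eq a b, gdist_eq b a]
    exact le_iInf fun p => iInf_le_of_le p.reverse (le_of_eq (wgt_reverse p))
  exact le_antisymm (h u v) (h v u)

lemma walk_parity {u v : GadgetVert G x} (p : (gadgetGraph G x).Walk u v) :
    ∃ k : ℕ, wgt p = (k : ℝ≥0∞) * 2⁻¹ ∧ ((k % 2 = 0) ↔ (u.isLeft = v.isLeft)) := by
  induction p with
  | nil => exact ⟨0, by simp [wgt], by simp⟩
  | @cons a c w h q ih =>
    obtain ⟨k, hk, hpar⟩ := ih
    have hd : wgt (SimpleGraph.Walk.cons h q) = wt G x a c + wgt q := by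
      simp [wgt]
    cases a with
    | inl av =>
      cases c with
      | inl cv => exact absurd h (not_adj_inl_inl _ _)
      | inr cg =>
        refine ⟨k + 1, ?_, ?_⟩
        · rw [hd, hk, wt_half']
          push_cast
          ring
        · simp only [isLeft_inl, isLeft_inr] at hpar ⊢
          rcases Bool.eq_false_or_eq_true w.isLeft with hw | hw <;>
            simp [hw] at hpar ⊢ <;> omega
    | inr ag =>
      cases c with
      | inl cv =>
        refine ⟨k + 1, ?_, ?_⟩
        · rw [hd, hk, wt_half]
          push_cast
          ring
        · simp only [isLeft_inl, isLeft_inr] at hpar ⊢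
          rcases Bool.eq_false_or_eq_true w.isLeft with hw | hw <;>
            simp [hw] at hpar ⊢ <;> omega
      | inr cg =>
        refine ⟨k, ?_, ?_⟩
        · rw [hd, hk, wt_inr_inr, zero_add]
        · simpa using hpar

/-- half-integer slack for distances from an original vertex to a gadget vertex -/
lemma gdist_slack {v : V} {u : GadgetAux G x} {r : ℕ}
    (h : gdist G x (inl v) (inr u) ≤ (r : ℝ≥0∞)) :
    gdist G x (inl v) (inr u) + 2⁻¹ ≤ (r : ℝ≥0∞) := by
  have hlt : gdist G x (inl v) (inr u) < (r : ℝ≥0∞) + 4⁻¹ :=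
    lt_of_le_of_lt h (ENNReal.lt_add_right (by simp) (by norm_num))
  rw [gdist_eq] at hlt
  obtain ⟨p, hp⟩ := iInf_lt_iff.mp hlt
  obtain ⟨k, hk, hpar⟩ := walk_parity p
  have hodd : k % 2 = 1 := by
    rcases Nat.mod_two_eq_zero_or_one k with h0 | h1
    · exact absurd (hpar.mp h0) (by simp)
    · exact h1
  obtain ⟨m, rfl⟩ : ∃ m, k = 2 * m + 1 := ⟨k / 2, by omega⟩
  have h2 : (2 : ℝ≥0∞) * 2⁻¹ = 1 := ENNReal.mul_inv_cancel (by norm_num) (by norm_num)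
  have hwval : wgt p = (m : ℝ≥0∞) + 2⁻¹ := by
    rw [hk]
    push_cast
    rw [add_mul, one_mul, mul_comm (2:ℝ≥0∞) (m:ℝ≥0∞), mul_assoc, h2, mul_one]
  have hmr : (m : ℝ≥0∞) < r := by
    by_contra hc
    push_neg at hc
    have : (r : ℝ≥0∞) + 4⁻¹ ≤ (m : ℝ≥0∞) + 4⁻¹ := add_le_add_left hc _
    have h45 : (m : ℝ≥0∞) + 4⁻¹ < (m : ℝ≥0∞) + 2⁻¹ := by
      refine (ENNReal.add_lt_add_iff_left (by simp)).mpr (by norm_num)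
    rw [hwval] at hp
    exact absurd (lt_trans (lt_of_le_of_lt this h45) hp) (lt_irrefl _)
  have hmr' : m < r := by exact_mod_cast hmr
  have hle : gdist G x (inl v) (inr u) ≤ (m : ℝ≥0∞) + 2⁻¹ := by
    rw [← hwval]; exact gdist_le_wgt p
  calc gdist G x (inl v) (inr u) + 2⁻¹ ≤ ((m : ℝ≥0∞) + 2⁻¹) + 2⁻¹ := add_le_add_left hle _
    _ = (m : ℝ≥0∞) + 1 := by rw [add_assoc, ENNReal.inv_two_add_inv_two]
    _ ≤ (r : ℝ≥0∞) := by exact_mod_cast hmr'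

end LCLGadgetThms

namespace LCLGadgetThms
open LCLGadget SimpleGraph Sum

variable {V : Type} [LinearOrder V] {G : SimpleGraph V} {x : Sym2 V → ℕ}

instance instDecAAdj : ∀ i j : Fin 6, Decidable (AAdj i j) := fun i j => by
  unfold AAdj; infer_instance

/-- The condition for a gadget vertex to exist. -/
def Cond (G : SimpleGraph V) (x : Sym2 V → ℕ) (a b : V) (i : ℕ) : Prop :=
  a < b ∧ G.Adj a b ∧ i < x s(a, b)

def mk (a b : V) (i : ℕ) (j : Fin 6) (h : Cond G x a b i) : GadgetAux G x :=
  ⟨(a, b, i, j), h⟩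

lemma cond_pred {a b : V} {i : ℕ} (h : Cond G x a b i) : Cond G x a b (i - 1) :=
  ⟨h.1, h.2.1, lt_of_le_of_lt (Nat.sub_le i 1) h.2.2⟩

lemma mk_ne_mk {a b : V} {i i' : ℕ} {j j' : Fin 6} {h : Cond G x a b i}
    {h' : Cond G x a b i'} (hne : i ≠ i' ∨ j ≠ j') :
    (Sum.inr (mk a b i j h) : GadgetVert G x) ≠ Sum.inr (mk a b i' j' h') := by
  intro hc
  rw [Sum.inr.injEq, mk, mk] at hc
  replace hc := congrArg Subtype.val hc
  simp only [Prod.mk.injEq] at hc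
  rcases hne with h1 | h1 <;> exact h1 (by tauto)

def isV (z : GadgetVert G x) (a b : V) (i : ℕ) (j : Fin 6) : Prop :=
  ∃ p : GadgetAux G x, p.val = (a, b, i, j) ∧ z = Sum.inr p

lemma isV_iff {z : GadgetVert G x} {a b : V} {i : ℕ} {j : Fin 6} (h : Cond G x a b i) :
    isV z a b i j ↔ z = Sum.inr (mk a b i j h) := by
  constructor
  · rintro ⟨p, hp, rfl⟩
    congr 1
    exact Subtype.ext hp
  · rintro rfl
    exact ⟨mk a b i j h, rfl, rfl⟩

lemma AAdj_ne {j j' : Fin 6} (h : AAdj j j') : j ≠ j' := by revert h; revert j j'; decide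


lemma aaR1 : ∀ j : Fin 6, AAdj 1 j → j = 2 ∨ j = 3 := by decide
lemma aaL1 : ∀ j : Fin 6, AAdj j 1 → j = 0 := by decide

lemma adj_of_AAdj {a b : V} {i : ℕ} (h : Cond G x a b i) {j j' : Fin 6} (hjj : AAdj j j') :
    (gadgetGraph G x).Adj (Sum.inr (mk a b i j h)) (Sum.inr (mk a b i j' h)) := by
  rw [gadgetGraph, SimpleGraph.fromRel_adj]
  exact ⟨mk_ne_mk (Or.inr (AAdj_ne hjj)), Or.inl ⟨rfl, rfl, Or.inl ⟨rfl, hjj⟩⟩⟩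

lemma adj_jump {a b : V} {i : ℕ} (h : Cond G x a b i) (h' : Cond G x a b (i + 1)) :
    (gadgetGraph G x).Adj (Sum.inr (mk a b i 5 h)) (Sum.inr (mk a b (i+1) 0 h')) := by
  rw [gadgetGraph, SimpleGraph.fromRel_adj]
  exact ⟨mk_ne_mk (Or.inl (by omega)), Or.inl ⟨rfl, rfl, Or.inr ⟨rfl, rfl, rfl⟩⟩⟩

lemma adj_inl_a {a b : V} (h : Cond G x a b 0) :
    (gadgetGraph G x).Adj (Sum.inl a) (Sum.inr (mk a b 0 0 h)) := by
  rw [gadgetGraph, SimpleGraph.fromRel_adj]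
  exact ⟨by simp, Or.inl (Or.inl ⟨rfl, rfl, rfl⟩)⟩

lemma adj_inl_b {a b : V} (h : Cond G x a b (x s(a,b) - 1)) :
    (gadgetGraph G x).Adj (Sum.inl b) (Sum.inr (mk a b (x s(a,b) - 1) 5 h)) := by
  rw [gadgetGraph, SimpleGraph.fromRel_adj]
  exact ⟨by simp, Or.inl (Or.inr ⟨rfl, rfl, rfl⟩)⟩

end LCLGadgetThms

namespace LCLGadgetThms
open LCLGadget SimpleGraph Sum
variable {V : Type} [LinearOrder V] {G : SimpleGraph V} {x : Sym2 V → ℕ}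

lemma aaR0 : ∀ j : Fin 6, AAdj 0 j → j = 1 ∨ j = 2 := by decide
lemma aaR2 : ∀ j : Fin 6, AAdj 2 j → j = 4 := by decide
lemma aaR3 : ∀ j : Fin 6, AAdj 3 j → j = 4 ∨ j = 5 := by decide
lemma aaR4 : ∀ j : Fin 6, AAdj 4 j → j = 5 := by decide
lemma aaR5 : ∀ j : Fin 6, AAdj 5 j → False := by decide
lemma aaL0 : ∀ j : Fin 6, AAdj j 0 → False := by decide
lemma aaL2 : ∀ j : Fin 6, AAdj j 2 → j = 0 ∨ j = 1 := by decide
lemma aaL3 : ∀ j : Fin 6, AAdj j 3 → j = 1 := by decide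
lemma aaL4 : ∀ j : Fin 6, AAdj j 4 → j = 2 ∨ j = 3 := by decide
lemma aaL5 : ∀ j : Fin 6, AAdj j 5 → j = 3 ∨ j = 4 := by decide

lemma adj_jump' {a b : V} {i i' : ℕ} (h : Cond G x a b i) (h' : Cond G x a b i')
    (hii : i' = i + 1) :
    (gadgetGraph G x).Adj (Sum.inr (mk a b i 5 h)) (Sum.inr (mk a b i' 0 h')) := by
  subst hii; exact adj_jump h h'

lemma adj1_iff {a b : V} {i : ℕ} (h : Cond G x a b i) (z : GadgetVert G x) :
    (gadgetGraph G x).Adj (Sum.inr (mk a b i 1 h)) z ↔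
      (z = Sum.inr (mk a b i 0 h) ∨ z = Sum.inr (mk a b i 2 h) ∨ z = Sum.inr (mk a b i 3 h)) := by
  constructor
  · intro hadj
    rw [gadgetGraph, SimpleGraph.fromRel_adj] at hadj
    obtain ⟨hne, hrel⟩ := hadj
    cases z with
    | inl s =>
      rcases hrel with hrel | hrel
      · exact hrel.elim
      · replace hrel : (s = a ∧ i = 0 ∧ (1 : Fin 6) = 0) ∨
            (s = b ∧ i = x s(a,b) - 1 ∧ (1 : Fin 6) = 5) := hrel
        rcases hrel with ⟨-, -, hj⟩ | ⟨-, -, hj⟩ <;> exact absurd hj (by decide)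
    | inr q =>
      obtain ⟨⟨a', b', i', j'⟩, hq⟩ := q
      rcases hrel with hrel | hrel
      · replace hrel : a = a' ∧ b = b' ∧ ((i = i' ∧ AAdj 1 j') ∨
            (i' = i + 1 ∧ (1 : Fin 6) = 5 ∧ j' = 0)) := hrel
        obtain ⟨rfl, rfl, hrest⟩ := hrel
        rcases hrest with ⟨rfl, hAA⟩ | ⟨-, hj, -⟩
        · rcases aaR1 j' hAA with rfl | rfl
          · exact Or.inr (Or.inl (by congr 1))
          · exact Or.inr (Or.inr (by congr 1))
        · exact absurd hj (by decide)
      · replace hrel : a' = a ∧ b' = b ∧ ((i' = i ∧ AAdj j' 1) ∨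
            (i = i' + 1 ∧ j' = 5 ∧ (1 : Fin 6) = 0)) := hrel
        obtain ⟨rfl, rfl, hrest⟩ := hrel
        rcases hrest with ⟨rfl, hAA⟩ | ⟨-, -, hj⟩
        · have := aaL1 j' hAA
          subst this
          exact Or.inl (by congr 1)
        · exact absurd hj (by decide)
  · rintro (rfl | rfl | rfl)
    · exact (adj_of_AAdj h (by decide : AAdj 0 1)).symm
    · exact adj_of_AAdj h (by decide : AAdj 1 2)
    · exact adj_of_AAdj h (by decide : AAdj 1 3)

lemma adj2_iff {a b : V} {i : ℕ} (h : Cond G x a b i) (z : GadgetVert G x) :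
    (gadgetGraph G x).Adj (Sum.inr (mk a b i 2 h)) z ↔
      (z = Sum.inr (mk a b i 0 h) ∨ z = Sum.inr (mk a b i 1 h) ∨ z = Sum.inr (mk a b i 4 h)) := by
  constructor
  · intro hadj
    rw [gadgetGraph, SimpleGraph.fromRel_adj] at hadj
    obtain ⟨hne, hrel⟩ := hadj
    cases z with
    | inl s =>
      rcases hrel with hrel | hrel
      · exact hrel.elim
      · replace hrel : (s = a ∧ i = 0 ∧ (2 : Fin 6) = 0) ∨
            (s = b ∧ i = x s(a,b) - 1 ∧ (2 : Fin 6) = 5) := hrel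
        rcases hrel with ⟨-, -, hj⟩ | ⟨-, -, hj⟩ <;> exact absurd hj (by decide)
    | inr q =>
      obtain ⟨⟨a', b', i', j'⟩, hq⟩ := q
      rcases hrel with hrel | hrel
      · replace hrel : a = a' ∧ b = b' ∧ ((i = i' ∧ AAdj 2 j') ∨
            (i' = i + 1 ∧ (2 : Fin 6) = 5 ∧ j' = 0)) := hrel
        obtain ⟨rfl, rfl, hrest⟩ := hrel
        rcases hrest with ⟨rfl, hAA⟩ | ⟨-, hj, -⟩
        · rcases aaR2 j' hAA with rfl
          exact Or.inr (Or.inr (by congr 1))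
        · exact absurd hj (by decide)
      · replace hrel : a' = a ∧ b' = b ∧ ((i' = i ∧ AAdj j' 2) ∨
            (i = i' + 1 ∧ j' = 5 ∧ (2 : Fin 6) = 0)) := hrel
        obtain ⟨rfl, rfl, hrest⟩ := hrel
        rcases hrest with ⟨rfl, hAA⟩ | ⟨-, -, hj⟩
        · rcases aaL2 j' hAA with rfl | rfl
          · exact Or.inl (by congr 1)
          · exact Or.inr (Or.inl (by congr 1))
        · exact absurd hj (by decide)
  · rintro (rfl | rfl | rfl)
    · exact (adj_of_AAdj h (by decide : AAdj 0 2)).symm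
    · exact (adj_of_AAdj h (by decide : AAdj 1 2)).symm
    · exact adj_of_AAdj h (by decide : AAdj 2 4)

lemma adj3_iff {a b : V} {i : ℕ} (h : Cond G x a b i) (z : GadgetVert G x) :
    (gadgetGraph G x).Adj (Sum.inr (mk a b i 3 h)) z ↔
      (z = Sum.inr (mk a b i 1 h) ∨ z = Sum.inr (mk a b i 4 h) ∨ z = Sum.inr (mk a b i 5 h)) := by
  constructor
  · intro hadj
    rw [gadgetGraph, SimpleGraph.fromRel_adj] at hadj
    obtain ⟨hne, hrel⟩ := hadj
    cases z with
    | inl s =>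
      rcases hrel with hrel | hrel
      · exact hrel.elim
      · replace hrel : (s = a ∧ i = 0 ∧ (3 : Fin 6) = 0) ∨
            (s = b ∧ i = x s(a,b) - 1 ∧ (3 : Fin 6) = 5) := hrel
        rcases hrel with ⟨-, -, hj⟩ | ⟨-, -, hj⟩ <;> exact absurd hj (by decide)
    | inr q =>
      obtain ⟨⟨a', b', i', j'⟩, hq⟩ := q
      rcases hrel with hrel | hrel
      · replace hrel : a = a' ∧ b = b' ∧ ((i = i' ∧ AAdj 3 j') ∨
            (i' = i + 1 ∧ (3 : Fin 6) = 5 ∧ j' = 0)) := hrel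
        obtain ⟨rfl, rfl, hrest⟩ := hrel
        rcases hrest with ⟨rfl, hAA⟩ | ⟨-, hj, -⟩
        · rcases aaR3 j' hAA with rfl | rfl
          · exact Or.inr (Or.inl (by congr 1))
          · exact Or.inr (Or.inr (by congr 1))
        · exact absurd hj (by decide)
      · replace hrel : a' = a ∧ b' = b ∧ ((i' = i ∧ AAdj j' 3) ∨
            (i = i' + 1 ∧ j' = 5 ∧ (3 : Fin 6) = 0)) := hrel
        obtain ⟨rfl, rfl, hrest⟩ := hrel
        rcases hrest with ⟨rfl, hAA⟩ | ⟨-, -, hj⟩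
        · rcases aaL3 j' hAA with rfl
          exact Or.inl (by congr 1)
        · exact absurd hj (by decide)
  · rintro (rfl | rfl | rfl)
    · exact (adj_of_AAdj h (by decide : AAdj 1 3)).symm
    · exact adj_of_AAdj h (by decide : AAdj 3 4)
    · exact adj_of_AAdj h (by decide : AAdj 3 5)

lemma adj4_iff {a b : V} {i : ℕ} (h : Cond G x a b i) (z : GadgetVert G x) :
    (gadgetGraph G x).Adj (Sum.inr (mk a b i 4 h)) z ↔
      (z = Sum.inr (mk a b i 2 h) ∨ z = Sum.inr (mk a b i 3 h) ∨ z = Sum.inr (mk a b i 5 h)) := by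
  constructor
  · intro hadj
    rw [gadgetGraph, SimpleGraph.fromRel_adj] at hadj
    obtain ⟨hne, hrel⟩ := hadj
    cases z with
    | inl s =>
      rcases hrel with hrel | hrel
      · exact hrel.elim
      · replace hrel : (s = a ∧ i = 0 ∧ (4 : Fin 6) = 0) ∨
            (s = b ∧ i = x s(a,b) - 1 ∧ (4 : Fin 6) = 5) := hrel
        rcases hrel with ⟨-, -, hj⟩ | ⟨-, -, hj⟩ <;> exact absurd hj (by decide)
    | inr q =>
      obtain ⟨⟨a', b', i', j'⟩, hq⟩ := q
      rcases hrel with hrel | hrel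
      · replace hrel : a = a' ∧ b = b' ∧ ((i = i' ∧ AAdj 4 j') ∨
            (i' = i + 1 ∧ (4 : Fin 6) = 5 ∧ j' = 0)) := hrel
        obtain ⟨rfl, rfl, hrest⟩ := hrel
        rcases hrest with ⟨rfl, hAA⟩ | ⟨-, hj, -⟩
        · rcases aaR4 j' hAA with rfl
          exact Or.inr (Or.inr (by congr 1))
        · exact absurd hj (by decide)
      · replace hrel : a' = a ∧ b' = b ∧ ((i' = i ∧ AAdj j' 4) ∨
            (i = i' + 1 ∧ j' = 5 ∧ (4 : Fin 6) = 0)) := hrel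
        obtain ⟨rfl, rfl, hrest⟩ := hrel
        rcases hrest with ⟨rfl, hAA⟩ | ⟨-, -, hj⟩
        · rcases aaL4 j' hAA with rfl | rfl
          · exact Or.inl (by congr 1)
          · exact Or.inr (Or.inl (by congr 1))
        · exact absurd hj (by decide)
  · rintro (rfl | rfl | rfl)
    · exact (adj_of_AAdj h (by decide : AAdj 2 4)).symm
    · exact (adj_of_AAdj h (by decide : AAdj 3 4)).symm
    · exact adj_of_AAdj h (by decide : AAdj 4 5)

lemma adj0_iff {a b : V} {i : ℕ} (h : Cond G x a b i) (z : GadgetVert G x) :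
    (gadgetGraph G x).Adj (Sum.inr (mk a b i 0 h)) z ↔
      ((i = 0 ∧ z = Sum.inl a) ∨ (i ≠ 0 ∧ z = Sum.inr (mk a b (i-1) 5 (cond_pred h))) ∨
        z = Sum.inr (mk a b i 1 h) ∨ z = Sum.inr (mk a b i 2 h)) := by
  constructor
  · intro hadj
    rw [gadgetGraph, SimpleGraph.fromRel_adj] at hadj
    obtain ⟨hne, hrel⟩ := hadj
    cases z with
    | inl s =>
      rcases hrel with hrel | hrel
      · exact hrel.elim
      · replace hrel : (s = a ∧ i = 0 ∧ (0 : Fin 6) = 0) ∨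
            (s = b ∧ i = x s(a,b) - 1 ∧ (0 : Fin 6) = 5) := hrel
        rcases hrel with ⟨rfl, hi, -⟩ | ⟨-, -, hj⟩
        · exact Or.inl ⟨hi, rfl⟩
        · exact absurd hj (by decide)
    | inr q =>
      obtain ⟨⟨a', b', i', j'⟩, hq⟩ := q
      rcases hrel with hrel | hrel
      · replace hrel : a = a' ∧ b = b' ∧ ((i = i' ∧ AAdj 0 j') ∨
            (i' = i + 1 ∧ (0 : Fin 6) = 5 ∧ j' = 0)) := hrel
        obtain ⟨rfl, rfl, hrest⟩ := hrel
        rcases hrest with ⟨rfl, hAA⟩ | ⟨-, hj, -⟩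
        · rcases aaR0 j' hAA with rfl | rfl
          · exact Or.inr (Or.inr (Or.inl (by congr 1)))
          · exact Or.inr (Or.inr (Or.inr (by congr 1)))
        · exact absurd hj (by decide)
      · replace hrel : a' = a ∧ b' = b ∧ ((i' = i ∧ AAdj j' 0) ∨
            (i = i' + 1 ∧ j' = 5 ∧ (0 : Fin 6) = 0)) := hrel
        obtain ⟨rfl, rfl, hrest⟩ := hrel
        rcases hrest with ⟨-, hAA⟩ | ⟨hii, rfl, -⟩
        · exact absurd hAA (aaL0 j')
        · refine Or.inr (Or.inl ⟨by omega, ?_⟩)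
          have : i' = i - 1 := by omega
          subst this
          congr 1
  · rintro (⟨rfl, rfl⟩ | ⟨hi, rfl⟩ | rfl | rfl)
    · exact (adj_inl_a h).symm
    · exact (adj_jump' (cond_pred h) h (by omega)).symm
    · exact adj_of_AAdj h (by decide : AAdj 0 1)
    · exact adj_of_AAdj h (by decide : AAdj 0 2)

lemma adj5_iff {a b : V} {i : ℕ} (h : Cond G x a b i) (z : GadgetVert G x) :
    (gadgetGraph G x).Adj (Sum.inr (mk a b i 5 h)) z ↔
      ((i = x s(a,b) - 1 ∧ z = Sum.inl b) ∨ (i ≠ x s(a,b) - 1 ∧ isV z a b (i+1) 0) ∨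
        z = Sum.inr (mk a b i 3 h) ∨ z = Sum.inr (mk a b i 4 h)) := by
  constructor
  · intro hadj
    rw [gadgetGraph, SimpleGraph.fromRel_adj] at hadj
    obtain ⟨hne, hrel⟩ := hadj
    cases z with
    | inl s =>
      rcases hrel with hrel | hrel
      · exact hrel.elim
      · replace hrel : (s = a ∧ i = 0 ∧ (5 : Fin 6) = 0) ∨
            (s = b ∧ i = x s(a,b) - 1 ∧ (5 : Fin 6) = 5) := hrel
        rcases hrel with ⟨-, -, hj⟩ | ⟨rfl, hi, -⟩
        · exact absurd hj (by decide)
        · exact Or.inl ⟨hi, rfl⟩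
    | inr q =>
      obtain ⟨⟨a', b', i', j'⟩, hq⟩ := q
      rcases hrel with hrel | hrel
      · replace hrel : a = a' ∧ b = b' ∧ ((i = i' ∧ AAdj 5 j') ∨
            (i' = i + 1 ∧ (5 : Fin 6) = 5 ∧ j' = 0)) := hrel
        obtain ⟨rfl, rfl, hrest⟩ := hrel
        rcases hrest with ⟨-, hAA⟩ | ⟨rfl, -, rfl⟩
        · exact absurd hAA (aaR5 j')
        · refine Or.inr (Or.inl ⟨?_, ⟨⟨(a, b, i+1, 0), hq⟩, rfl, rfl⟩⟩)
          have := hq.2.2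
          simp only at this
          omega
      · replace hrel : a' = a ∧ b' = b ∧ ((i' = i ∧ AAdj j' 5) ∨
            (i = i' + 1 ∧ j' = 5 ∧ (5 : Fin 6) = 0)) := hrel
        obtain ⟨rfl, rfl, hrest⟩ := hrel
        rcases hrest with ⟨rfl, hAA⟩ | ⟨-, -, hj⟩
        · rcases aaL5 j' hAA with rfl | rfl
          · exact Or.inr (Or.inr (Or.inl (by congr 1)))
          · exact Or.inr (Or.inr (Or.inr (by congr 1)))
        · exact absurd hj (by decide)
  · rintro (⟨rfl, rfl⟩ | ⟨hi, p, hp, rfl⟩ | rfl | rfl)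
    · exact (adj_inl_b h).symm
    · have hc : Cond G x a b (i+1) := by
        refine ⟨h.1, h.2.1, ?_⟩
        have := p.prop.2.2
        rw [hp] at this
        exact this
      have : Sum.inr p = (Sum.inr (mk a b (i+1) 0 hc) : GadgetVert G x) := by
        congr 1
        exact Subtype.ext hp
      rw [this]
      exact adj_jump' h hc rfl
    · exact (adj_of_AAdj h (by decide : AAdj 3 5)).symm
    · exact (adj_of_AAdj h (by decide : AAdj 4 5)).symm

end LCLGadgetThms

namespace LCLGadgetThms
open LCLGadget SimpleGraph Sum
variable {V : Type} [LinearOrder V] {G : SimpleGraph V} {x : Sym2 V → ℕ}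

lemma mk_ne {a b : V} {i i' : ℕ} {j j' : Fin 6} {h : Cond G x a b i}
    {h' : Cond G x a b i'} (hne : i ≠ i' ∨ j ≠ j') :
    mk (G:=G) (x:=x) a b i j h ≠ mk a b i' j' h' := by
  intro hc
  rw [mk, mk] at hc
  replace hc := congrArg Subtype.val hc
  simp only [Prod.mk.injEq] at hc
  rcases hne with h1 | h1 <;> exact h1 (by tauto)

/-- The local picture of the six gadget vertices of the gadget at an outer vertex `n`
adjacent to the original vertex `v`, relabelled so that `n = g0`. -/
structure Frame (G : SimpleGraph V) (x : Sym2 V → ℕ) (v : V) (n : GadgetAux G x) where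
  g1 : GadgetAux G x
  g2 : GadgetAux G x
  g3 : GadgetAux G x
  g4 : GadgetAux G x
  g5 : GadgetAux G x
  nx : GadgetVert G x
  e0 : ∀ z, (gadgetGraph G x).Adj (Sum.inr n) z ↔
        (z = Sum.inl v ∨ z = Sum.inr g1 ∨ z = Sum.inr g2)
  e1 : ∀ z, (gadgetGraph G x).Adj (Sum.inr g1) z ↔
        (z = Sum.inr n ∨ z = Sum.inr g2 ∨ z = Sum.inr g3)
  e2 : ∀ z, (gadgetGraph G x).Adj (Sum.inr g2) z ↔
        (z = Sum.inr n ∨ z = Sum.inr g1 ∨ z = Sum.inr g4)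
  e3 : ∀ z, (gadgetGraph G x).Adj (Sum.inr g3) z ↔
        (z = Sum.inr g1 ∨ z = Sum.inr g4 ∨ z = Sum.inr g5)
  e4 : ∀ z, (gadgetGraph G x).Adj (Sum.inr g4) z ↔
        (z = Sum.inr g2 ∨ z = Sum.inr g3 ∨ z = Sum.inr g5)
  e5 : ∀ z, (gadgetGraph G x).Adj (Sum.inr g5) z ↔
        (z = Sum.inr g3 ∨ z = Sum.inr g4 ∨ z = nx)
  d01 : n ≠ g1
  d02 : n ≠ g2
  d03 : n ≠ g3
  d04 : n ≠ g4
  d05 : n ≠ g5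
  d12 : g1 ≠ g2
  d13 : g1 ≠ g3
  d14 : g1 ≠ g4
  d15 : g1 ≠ g5
  d23 : g2 ≠ g3
  d24 : g2 ≠ g4
  d25 : g2 ≠ g5
  d34 : g3 ≠ g4
  d35 : g3 ≠ g5
  d45 : g4 ≠ g5

/-- The `(12)(34)` symmetry of the A-gadget applied to a frame. -/
def Frame.twist {v : V} {n : GadgetAux G x} (F : Frame G x v n) : Frame G x v n where
  g1 := F.g2
  g2 := F.g1
  g3 := F.g4
  g4 := F.g3
  g5 := F.g5
  nx := F.nx
  e0 := fun z => by rw [F.e0 z]; tauto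
  e1 := F.e2
  e2 := F.e1
  e3 := F.e4
  e4 := F.e3
  e5 := fun z => by rw [F.e5 z]; tauto
  d01 := F.d02
  d02 := F.d01
  d03 := F.d04
  d04 := F.d03
  d05 := F.d05
  d12 := fun h => F.d12 h.symm
  d13 := fun h => F.d24 h
  d14 := fun h => F.d23 h
  d15 := fun h => F.d25 h
  d23 := fun h => F.d14 h
  d24 := fun h => F.d13 h
  d25 := fun h => F.d15 h
  d34 := fun h => F.d34 h.symm
  d35 := fun h => F.d45 h
  d45 := fun h => F.d35 h

end LCLGadgetThms

namespace LCLGadgetThms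
open LCLGadget SimpleGraph Sum
variable {V : Type} [LinearOrder V] {G : SimpleGraph V} {x : Sym2 V → ℕ}

/-- Frame at an outer vertex of the form `(a,b,0,0)` (adjacent to the original `a`). -/
noncomputable def frame0 {a b : V} (h : Cond G x a b 0) :
    Frame G x a (mk a b 0 0 h) where
  g1 := mk a b 0 1 h
  g2 := mk a b 0 2 h
  g3 := mk a b 0 3 h
  g4 := mk a b 0 4 h
  g5 := mk a b 0 5 h
  nx := if hx1 : x s(a,b) = 1 then Sum.inl b
        else Sum.inr (mk a b 1 0 ⟨h.1, h.2.1, by have := h.2.2; omega⟩)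
  e0 := fun z => by rw [adj0_iff h z]; simp
  e1 := fun z => by rw [adj1_iff h z]
  e2 := fun z => by rw [adj2_iff h z]
  e3 := fun z => by rw [adj3_iff h z]
  e4 := fun z => by rw [adj4_iff h z]
  e5 := fun z => by
    rw [adj5_iff h z]
    by_cases hx1 : x s(a,b) = 1
    · simp only [hx1, dif_pos]
      norm_num
      tauto
    · have hne : (0 : ℕ) ≠ x s(a,b) - 1 := by have := h.2.2; omega
      have hc1 : Cond G x a b 1 := ⟨h.1, h.2.1, by have := h.2.2; omega⟩
      simp only [hx1, dif_neg, not_false_iff]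
      rw [isV_iff hc1]
      constructor
      · rintro (⟨he, -⟩ | ⟨-, rfl⟩ | rfl | rfl) <;> tauto
      · rintro (rfl | rfl | rfl) <;> tauto
  d01 := mk_ne (Or.inr (by decide))
  d02 := mk_ne (Or.inr (by decide))
  d03 := mk_ne (Or.inr (by decide))
  d04 := mk_ne (Or.inr (by decide))
  d05 := mk_ne (Or.inr (by decide))
  d12 := mk_ne (Or.inr (by decide))
  d13 := mk_ne (Or.inr (by decide))
  d14 := mk_ne (Or.inr (by decide))
  d15 := mk_ne (Or.inr (by decide))
  d23 := mk_ne (Or.inr (by decide))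
  d24 := mk_ne (Or.inr (by decide))
  d25 := mk_ne (Or.inr (by decide))
  d34 := mk_ne (Or.inr (by decide))
  d35 := mk_ne (Or.inr (by decide))
  d45 := mk_ne (Or.inr (by decide))

/-- Frame at an outer vertex of the form `(a,b,x-1,5)` (adjacent to the original `b`). -/
noncomputable def frame5 {a b : V} (h : Cond G x a b (x s(a,b) - 1)) :
    Frame G x b (mk a b (x s(a,b) - 1) 5 h) where
  g1 := mk a b (x s(a,b) - 1) 4 h
  g2 := mk a b (x s(a,b) - 1) 3 h
  g3 := mk a b (x s(a,b) - 1) 2 h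
  g4 := mk a b (x s(a,b) - 1) 1 h
  g5 := mk a b (x s(a,b) - 1) 0 h
  nx := if hx1 : x s(a,b) - 1 = 0 then Sum.inl a
        else Sum.inr (mk a b (x s(a,b) - 1 - 1) 5 (cond_pred h))
  e0 := fun z => by
    rw [adj5_iff h z]
    constructor
    · rintro (⟨-, rfl⟩ | ⟨hne, -⟩ | rfl | rfl) <;> tauto
    · rintro (rfl | rfl | rfl)
      · exact Or.inl ⟨rfl, rfl⟩
      · tauto
      · tauto
  e1 := fun z => by rw [adj4_iff h z]; tauto
  e2 := fun z => by rw [adj3_iff h z]; tauto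
  e3 := fun z => by rw [adj2_iff h z]; tauto
  e4 := fun z => by rw [adj1_iff h z]; tauto
  e5 := fun z => by
    rw [adj0_iff h z]
    by_cases hx1 : x s(a,b) - 1 = 0
    · simp only [hx1, dif_pos]
      constructor
      · rintro (⟨-, rfl⟩ | ⟨hne, -⟩ | rfl | rfl) <;> tauto
      · rintro (rfl | rfl | rfl) <;> tauto
    · simp only [hx1, dif_neg, not_false_iff]
      constructor
      · rintro (⟨he, -⟩ | ⟨-, rfl⟩ | rfl | rfl) <;> tauto
      · rintro (rfl | rfl | rfl) <;> tauto
  d01 := mk_ne (Or.inr (by decide))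
  d02 := mk_ne (Or.inr (by decide))
  d03 := mk_ne (Or.inr (by decide))
  d04 := mk_ne (Or.inr (by decide))
  d05 := mk_ne (Or.inr (by decide))
  d12 := mk_ne (Or.inr (by decide))
  d13 := mk_ne (Or.inr (by decide))
  d14 := mk_ne (Or.inr (by decide))
  d15 := mk_ne (Or.inr (by decide))
  d23 := mk_ne (Or.inr (by decide))
  d24 := mk_ne (Or.inr (by decide))
  d25 := mk_ne (Or.inr (by decide))
  d34 := mk_ne (Or.inr (by decide))
  d35 := mk_ne (Or.inr (by decide))
  d45 := mk_ne (Or.inr (by decide))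

end LCLGadgetThms

namespace LCLGadgetThms
open LCLGadget SimpleGraph Sum
variable {V : Type} [LinearOrder V] {G : SimpleGraph V} {x : Sym2 V → ℕ}

lemma inr_ne {p q : GadgetAux G x} (h : p ≠ q) :
    (Sum.inr p : GadgetVert G x) ≠ Sum.inr q := fun hc => h (Sum.inr.inj hc)

/-- Every gadget vertex has exactly three neighbours, two of which are adjacent
gadget vertices (a triangle). -/
lemma gadget_triangle (q : GadgetAux G x) :
    ∃ (t1 t2 : GadgetAux G x) (t3 : GadgetVert G x),
      (∀ z, (gadgetGraph G x).Adj (Sum.inr q) z ↔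
        (z = Sum.inr t1 ∨ z = Sum.inr t2 ∨ z = t3)) ∧
      (Sum.inr t1 : GadgetVert G x) ≠ t3 ∧ (Sum.inr t2 : GadgetVert G x) ≠ t3 ∧
      t1 ≠ t2 ∧ (gadgetGraph G x).Adj (Sum.inr t1) (Sum.inr t2) := by
  obtain ⟨⟨a, b, i, j⟩, hq⟩ := q
  have hc : Cond G x a b i := hq
  fin_cases j
  · -- j = 0
    by_cases hi : i = 0
    · subst hi
      refine ⟨mk a b 0 1 hc, mk a b 0 2 hc, Sum.inl a,
        fun z => (adj0_iff hc z).trans ?_, by simp [mk], by simp [mk],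
        mk_ne (Or.inr (by decide)), adj_of_AAdj hc (by decide : AAdj 1 2)⟩
      constructor
      · rintro (⟨-, rfl⟩ | ⟨hne, -⟩ | rfl | rfl) <;> tauto
      · rintro (rfl | rfl | rfl) <;> tauto
    · refine ⟨mk a b i 1 hc, mk a b i 2 hc, Sum.inr (mk a b (i-1) 5 (cond_pred hc)),
        fun z => (adj0_iff hc z).trans ?_, inr_ne (mk_ne (Or.inl (by omega))),
        inr_ne (mk_ne (Or.inl (by omega))),
        mk_ne (Or.inr (by decide)), adj_of_AAdj hc (by decide : AAdj 1 2)⟩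
      constructor
      · rintro (⟨hi0, -⟩ | ⟨-, rfl⟩ | rfl | rfl) <;> tauto
      · rintro (rfl | rfl | rfl) <;> tauto
  · -- j = 1
    exact ⟨mk a b i 0 hc, mk a b i 2 hc, Sum.inr (mk a b i 3 hc),
      fun z => adj1_iff hc z, inr_ne (mk_ne (Or.inr (by decide))),
      inr_ne (mk_ne (Or.inr (by decide))),
      mk_ne (Or.inr (by decide)), adj_of_AAdj hc (by decide : AAdj 0 2)⟩
  · -- j = 2
    exact ⟨mk a b i 0 hc, mk a b i 1 hc, Sum.inr (mk a b i 4 hc),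
      fun z => adj2_iff hc z, inr_ne (mk_ne (Or.inr (by decide))),
      inr_ne (mk_ne (Or.inr (by decide))),
      mk_ne (Or.inr (by decide)), adj_of_AAdj hc (by decide : AAdj 0 1)⟩
  · -- j = 3
    refine ⟨mk a b i 4 hc, mk a b i 5 hc, Sum.inr (mk a b i 1 hc),
      fun z => (adj3_iff hc z).trans (by tauto), inr_ne (mk_ne (Or.inr (by decide))),
      inr_ne (mk_ne (Or.inr (by decide))),
      mk_ne (Or.inr (by decide)), adj_of_AAdj hc (by decide : AAdj 4 5)⟩
  · -- j = 4
    refine ⟨mk a b i 3 hc, mk a b i 5 hc, Sum.inr (mk a b i 2 hc),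
      fun z => (adj4_iff hc z).trans (by tauto), inr_ne (mk_ne (Or.inr (by decide))),
      inr_ne (mk_ne (Or.inr (by decide))),
      mk_ne (Or.inr (by decide)), adj_of_AAdj hc (by decide : AAdj 3 5)⟩
  · -- j = 5
    by_cases hi : i = x s(a,b) - 1
    · refine ⟨mk a b i 3 hc, mk a b i 4 hc, Sum.inl b,
        fun z => (adj5_iff hc z).trans ?_, by simp [mk], by simp [mk],
        mk_ne (Or.inr (by decide)), adj_of_AAdj hc (by decide : AAdj 3 4)⟩
      constructor
      · rintro (⟨-, rfl⟩ | ⟨hne, -⟩ | rfl | rfl) <;> tauto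
      · rintro (rfl | rfl | rfl) <;> tauto
    · have hc1 : Cond G x a b (i + 1) := ⟨hc.1, hc.2.1, by have := hc.2.2; omega⟩
      refine ⟨mk a b i 3 hc, mk a b i 4 hc, Sum.inr (mk a b (i+1) 0 hc1),
        fun z => (adj5_iff hc z).trans ?_, inr_ne (mk_ne (Or.inl (by omega))),
        inr_ne (mk_ne (Or.inl (by omega))),
        mk_ne (Or.inr (by decide)), adj_of_AAdj hc (by decide : AAdj 3 4)⟩
      constructor
      · rintro (⟨hi0, -⟩ | ⟨-, hv⟩ | rfl | rfl)
        · exact absurd hi0 hi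
        · rw [isV_iff hc1] at hv
          tauto
        · tauto
        · tauto
      · rintro (rfl | rfl | rfl)
        · tauto
        · tauto
        · exact Or.inr (Or.inl ⟨hi, (isV_iff hc1).mpr rfl⟩)

end LCLGadgetThms

namespace LCLGadgetThms
open LCLGadget SimpleGraph Sum
variable {V : Type} [LinearOrder V] {G : SimpleGraph V} {x : Sym2 V → ℕ}
  {χ : GadgetVert G x → ℕ}

/-- Bundled data of an outer vertex at an original vertex `v`. -/
structure OuterAt (G : SimpleGraph V) (x : Sym2 V → ℕ) (v : V) where
  o : GadgetAux G x
  adj : (gadgetGraph G x).Adj (Sum.inl v) (Sum.inr o)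
  frame : Frame G x v o

noncomputable def mkOuter (v c : V) (hGvc : G.Adj v c) (hx : 0 < x s(v, c)) :
    OuterAt G x v :=
  if hlt : v < c then
    { o := mk v c 0 0 ⟨hlt, hGvc, hx⟩
      adj := adj_inl_a _
      frame := frame0 _ }
  else
    have hlt' : c < v := lt_of_le_of_ne (le_of_not_gt hlt) (fun h => hGvc.ne h.symm)
    have hcc : Cond G x c v (x s(c, v) - 1) :=
      ⟨hlt', hGvc.symm, by rw [show s(c,v) = s(v,c) from Sym2.eq_swap]; omega⟩
    { o := mk c v (x s(c, v) - 1) 5 hcc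
      adj := adj_inl_b hcc
      frame := frame5 hcc }

lemma mkOuter_o_ne {v c c' : V} (hne : c ≠ c') (h1 : G.Adj v c) (h2 : 0 < x s(v,c))
    (h3 : G.Adj v c') (h4 : 0 < x s(v,c')) :
    (mkOuter v c h1 h2).o ≠ (mkOuter v c' h3 h4).o := by
  unfold mkOuter
  split_ifs with hl1 hl2 hl2 <;> intro hcon <;>
    simp only [mk, Subtype.mk.injEq, Prod.mk.injEq] at hcon
  · exact hne hcon.2.1
  · exact absurd hcon.2.2.2 (by decide)
  · exact absurd hcon.2.2.2 (by decide)
  · exact hne hcon.1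

lemma inj_adj_adj (hχ2 : Dist2Coloring G x χ) {c y z : GadgetVert G x}
    (hy : (gadgetGraph G x).Adj c y) (hz : (gadgetGraph G x).Adj c z)
    (he : χ y = χ z) : y = z :=
  hχ2 c (Set.mem_insert_of_mem _ hy) (Set.mem_insert_of_mem _ hz) he

lemma inj_self_adj (hχ2 : Dist2Coloring G x χ) {c z : GadgetVert G x}
    (hz : (gadgetGraph G x).Adj c z) (he : χ c = χ z) : c = z :=
  hχ2 c (Set.mem_insert _ _) (Set.mem_insert_of_mem _ hz) he

/-- The core local contradiction: a triangle edge `p q` colored like two distinct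
outer vertices `A`, `B` at `v`, with `A` in the `r`-gball of `p`, is impossible. -/
lemma kill {r : ℕ} (hr1 : (1 : ℝ≥0∞) ≤ (r : ℝ≥0∞))
    (hχ2 : Dist2Coloring G x χ) (hχc : EdgeConsistent G x r χ)
    {v : V} (A B C : GadgetAux G x) (FA : Frame G x v A)
    (hadjA : (gadgetGraph G x).Adj (Sum.inl v) (Sum.inr A))
    (hadjB : (gadgetGraph G x).Adj (Sum.inl v) (Sum.inr B))
    (hadjC : (gadgetGraph G x).Adj (Sum.inl v) (Sum.inr C))
    (hAB : A ≠ B) (hAC : A ≠ C) (hBC : B ≠ C)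
    (p q : GadgetVert G x)
    (hpq : (gadgetGraph G x).Adj p q)
    (hχp : χ p = χ (Sum.inr A)) (hχq : χ q = χ (Sum.inr B))
    (hball : gdist G x p (Sum.inr A) ≤ (r : ℝ≥0∞)) : False := by
  have h21 : (2⁻¹ : ℝ≥0∞) ≤ 1 := by norm_num
  -- color distinctions around v
  have hχAB : χ (Sum.inr A) ≠ χ (Sum.inr B) :=
    fun he => hAB (Sum.inr.inj (inj_adj_adj hχ2 hadjA hadjB he))
  have hχAC : χ (Sum.inr A) ≠ χ (Sum.inr C) :=
    fun he => hAC (Sum.inr.inj (inj_adj_adj hχ2 hadjA hadjC he))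
  have hχBC : χ (Sum.inr B) ≠ χ (Sum.inr C) :=
    fun he => hBC (Sum.inr.inj (inj_adj_adj hχ2 hadjB hadjC he))
  have hχvA : χ (Sum.inl v) ≠ χ (Sum.inr A) :=
    fun he => by simpa using inj_self_adj hχ2 hadjA he
  have hχvB : χ (Sum.inl v) ≠ χ (Sum.inr B) :=
    fun he => by simpa using inj_self_adj hχ2 hadjB he
  -- the inner argument, for a frame F at A with χ (F.g1) = χ B
  have key : ∀ F : Frame G x v A, χ (Sum.inr (Frame.g1 F)) = χ (Sum.inr B) → False := by
    intro F hg1B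
    have adjA1 : (gadgetGraph G x).Adj (Sum.inr A) (Sum.inr F.g1) :=
      (F.e0 _).mpr (Or.inr (Or.inl rfl))
    have adjA2 : (gadgetGraph G x).Adj (Sum.inr A) (Sum.inr F.g2) :=
      (F.e0 _).mpr (Or.inr (Or.inr rfl))
    have adjAv : (gadgetGraph G x).Adj (Sum.inr A) (Sum.inl v) :=
      (F.e0 _).mpr (Or.inl rfl)
    have adj13 : (gadgetGraph G x).Adj (Sum.inr F.g1) (Sum.inr F.g3) :=
      (F.e1 _).mpr (Or.inr (Or.inr rfl))
    have adj35 : (gadgetGraph G x).Adj (Sum.inr F.g3) (Sum.inr F.g5) :=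
      (F.e3 _).mpr (Or.inr (Or.inr rfl))
    have adj24 : (gadgetGraph G x).Adj (Sum.inr F.g2) (Sum.inr F.g4) :=
      (F.e2 _).mpr (Or.inr (Or.inr rfl))
    have adj2A : (gadgetGraph G x).Adj (Sum.inr F.g2) (Sum.inr A) :=
      (F.e2 _).mpr (Or.inl rfl)
    -- distances
    have dvA : gdist G x (Sum.inl v) (Sum.inr A) ≤ 2⁻¹ :=
      le_of_le_of_eq (gdist_le_wt hadjA) (wt_half' _ _)
    have dA1 : gdist G x (Sum.inr A) (Sum.inr F.g1) ≤ 0 :=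
      le_of_le_of_eq (gdist_le_wt adjA1) (wt_inr_inr _ _)
    have d13 : gdist G x (Sum.inr F.g1) (Sum.inr F.g3) ≤ 0 :=
      le_of_le_of_eq (gdist_le_wt adj13) (wt_inr_inr _ _)
    have d35 : gdist G x (Sum.inr F.g3) (Sum.inr F.g5) ≤ 0 :=
      le_of_le_of_eq (gdist_le_wt adj35) (wt_inr_inr _ _)
    have dv1 : gdist G x (Sum.inl v) (Sum.inr F.g1) ≤ 2⁻¹ := by
      refine le_trans (gdist_triangle _ (Sum.inr A) _) ?_
      calc gdist G x (Sum.inl v) (Sum.inr A) + gdist G x (Sum.inr A) (Sum.inr F.g1)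
          ≤ 2⁻¹ + 0 := add_le_add dvA dA1
        _ = 2⁻¹ := by rw [add_zero]
    have dv3 : gdist G x (Sum.inl v) (Sum.inr F.g3) ≤ 2⁻¹ := by
      refine le_trans (gdist_triangle _ (Sum.inr F.g1) _) ?_
      calc gdist G x (Sum.inl v) (Sum.inr F.g1) + gdist G x (Sum.inr F.g1) (Sum.inr F.g3)
          ≤ 2⁻¹ + 0 := add_le_add dv1 d13
        _ = 2⁻¹ := by rw [add_zero]
    have dA5 : gdist G x (Sum.inr A) (Sum.inr F.g5) ≤ 0 := by
      refine le_trans (gdist_triangle _ (Sum.inr F.g1) _) ?_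
      refine le_trans (add_le_add dA1 (le_refl _)) ?_
      rw [zero_add]
      refine le_trans (gdist_triangle _ (Sum.inr F.g3) _) ?_
      calc gdist G x (Sum.inr F.g1) (Sum.inr F.g3) + gdist G x (Sum.inr F.g3) (Sum.inr F.g5)
          ≤ 0 + 0 := add_le_add d13 d35
        _ = 0 := by rw [add_zero]
    have dB1 : gdist G x (Sum.inr B) (Sum.inr F.g1) ≤ (r : ℝ≥0∞) := by
      refine le_trans (gdist_triangle _ (Sum.inl v) _) (le_trans ?_ hr1)
      calc gdist G x (Sum.inr B) (Sum.inl v) + gdist G x (Sum.inl v) (Sum.inr F.g1)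
          ≤ 2⁻¹ + 2⁻¹ :=
            add_le_add (le_of_le_of_eq (gdist_le_wt hadjB.symm) (wt_half _ _)) dv1
        _ = 1 := ENNReal.inv_two_add_inv_two
    -- step 4a : a neighbour of g1 colored like v must be g3
    obtain ⟨z₁, hz₁adj, hz₁col⟩ :=
      hχc (Sum.inr B) (Sum.inl v) hadjB.symm (Sum.inr F.g1) dB1 hg1B
    have hg3 : χ (Sum.inr F.g3) = χ (Sum.inl v) := by
      rcases (F.e1 _).mp hz₁adj with rfl | rfl | rfl
      · exact absurd hz₁col.symm hχvA
      · exact absurd (inj_adj_adj hχ2 adjA2 adjAv hz₁col) (by simp)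
      · exact hz₁col
    -- step 4b : neighbours of g3 colored like A and C
    have dv3r : gdist G x (Sum.inl v) (Sum.inr F.g3) ≤ (r : ℝ≥0∞) :=
      le_trans dv3 (le_trans h21 hr1)
    obtain ⟨yA, hyAadj, hyAcol⟩ :=
      hχc (Sum.inl v) (Sum.inr A) hadjA (Sum.inr F.g3) dv3r hg3
    obtain ⟨yC, hyCadj, hyCcol⟩ :=
      hχc (Sum.inl v) (Sum.inr C) hadjC (Sum.inr F.g3) dv3r hg3
    have hg5 : χ (Sum.inr F.g5) = χ (Sum.inr A) := by
      rcases (F.e3 _).mp hyAadj with rfl | rfl | rfl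
      · exact absurd (hg1B.symm.trans hyAcol) hχAB.symm
      · exact absurd (Sum.inr.inj (inj_adj_adj hχ2 adj24 adj2A hyAcol)).symm F.d04
      · exact hyAcol
    have hg4 : χ (Sum.inr F.g4) = χ (Sum.inr C) := by
      rcases (F.e3 _).mp hyCadj with rfl | rfl | rfl
      · exact absurd (hg1B.symm.trans hyCcol) hχBC
      · exact hyCcol
      · exact absurd (hg5.symm.trans hyCcol) hχAC
    -- step 4c : both neighbours of g5 colored like g1 and like g2 must be nx
    have dA5r : gdist G x (Sum.inr A) (Sum.inr F.g5) ≤ (r : ℝ≥0∞) :=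
      le_trans dA5 zero_le
    obtain ⟨y, hyadj, hycol⟩ :=
      hχc (Sum.inr A) (Sum.inr F.g1) adjA1 (Sum.inr F.g5) dA5r hg5
    obtain ⟨y', hy'adj, hy'col⟩ :=
      hχc (Sum.inr A) (Sum.inr F.g2) adjA2 (Sum.inr F.g5) dA5r hg5
    have hnx1 : χ F.nx = χ (Sum.inr F.g1) := by
      rcases (F.e5 _).mp hyadj with rfl | rfl | rfl
      · exact absurd (hg3.symm.trans (hycol.trans hg1B)) hχvB
      · exact absurd (Sum.inr.inj (inj_adj_adj hχ2 adj13.symm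
          ((F.e3 _).mpr (Or.inr (Or.inl rfl))) hycol.symm)) F.d14
      · exact hycol
    have hnx2 : χ F.nx = χ (Sum.inr F.g2) := by
      rcases (F.e5 _).mp hy'adj with rfl | rfl | rfl
      · exact absurd (inj_adj_adj hχ2 adjAv adjA2 (hg3.symm.trans hy'col)) (by simp)
      · exact absurd (Sum.inr.inj (inj_self_adj hχ2 adj24 hy'col.symm)) F.d24
      · exact hy'col
    exact F.d12 (Sum.inr.inj (inj_adj_adj hχ2 adjA1 adjA2 (hnx1.symm.trans hnx2)))
  -- step 3 : find the neighbour of A colored like B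
  obtain ⟨c0, hc0adj, hc0col⟩ := hχc p q hpq (Sum.inr A) hball hχp.symm
  rcases (FA.e0 _).mp hc0adj with rfl | rfl | rfl
  · exact hχvB (hc0col.trans hχq)
  · exact key FA (hc0col.trans hχq)
  · exact key FA.twist (hc0col.trans hχq)

end LCLGadgetThms

namespace LCLGadgetThms
open LCLGadget SimpleGraph Sum
variable {V : Type} [LinearOrder V] {G : SimpleGraph V} {x : Sym2 V → ℕ}
  {χ : GadgetVert G x → ℕ}

lemma pigeon {α : Type*} {m1 m2 m3 z1 z2 z3 : α}
    (h1 : m1 = z1 ∨ m1 = z2 ∨ m1 = z3)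
    (h2 : m2 = z1 ∨ m2 = z2 ∨ m2 = z3)
    (h3 : m3 = z1 ∨ m3 = z2 ∨ m3 = z3)
    (d12 : m1 ≠ m2) (d13 : m1 ≠ m3) (d23 : m2 ≠ m3) :
    z1 = m1 ∨ z1 = m2 ∨ z1 = m3 := by
  rcases h1 with h1 | h1 | h1 <;> rcases h2 with h2 | h2 | h2 <;>
    rcases h3 with h3 | h3 | h3 <;> subst_vars <;> tauto

lemma pigeon' {α : Type*} {m1 m2 m3 z1 z2 z3 : α}
    (h1 : m1 = z1 ∨ m1 = z2 ∨ m1 = z3)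
    (h2 : m2 = z1 ∨ m2 = z2 ∨ m2 = z3)
    (h3 : m3 = z1 ∨ m3 = z2 ∨ m3 = z3)
    (d12 : m1 ≠ m2) (d13 : m1 ≠ m3) (d23 : m2 ≠ m3) :
    z2 = m1 ∨ z2 = m2 ∨ z2 = m3 := by
  rcases h1 with h1 | h1 | h1 <;> rcases h2 with h2 | h2 | h2 <;>
    rcases h3 with h3 | h3 | h3 <;> subst_vars <;> tauto

theorem aux_stmt4 (G : SimpleGraph V) (x : Sym2 V → ℕ) (r : ℕ) (hr : 0 < r)
    (hgad : CorrectlyGadgeted G x r)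
    (χ : GadgetVert G x → ℕ)
    (hχ2 : Dist2Coloring G x χ)
    (hχc : EdgeConsistent G x r χ)
    (v : V) (w : GadgetVert G x) (hwout : IsOuter G x w)
    (hwadj : (gadgetGraph G x).Adj (Sum.inl v) w) :
    ∀ u : GadgetVert G x, inGball G x r (Sum.inl v) u → IsInner G x u →
      χ u ≠ χ w := by
  obtain ⟨hreg, hpos, -⟩ := hgad
  intro u hball hinner hcol
  obtain ⟨u', rfl⟩ := hinner.1
  have hr1 : (1 : ℝ≥0∞) ≤ (r : ℝ≥0∞) := by
    have : (1 : ℕ) ≤ r := hr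
    exact_mod_cast this
  have hball' : gdist G x (Sum.inl v) (Sum.inr u') ≤ (r : ℝ≥0∞) := hball
  have hslack : gdist G x (Sum.inl v) (Sum.inr u') + 2⁻¹ ≤ (r : ℝ≥0∞) :=
    gdist_slack hball'
  -- step 1 : a neighbour of u colored like v
  have hwv : (gadgetGraph G x).Adj w (Sum.inl v) := hwadj.symm
  have hwu : gdist G x w (Sum.inr u') ≤ (r : ℝ≥0∞) := by
    refine le_trans (gdist_triangle _ (Sum.inl v) _) ?_
    refine le_trans (add_le_add
      (le_of_le_of_eq (gdist_le_wt hwv) (wt_half _ _)) (le_refl _)) ?_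
    rw [add_comm]
    exact hslack
  obtain ⟨u₁, hu₁adj, hu₁col⟩ := hχc w (Sum.inl v) hwv (Sum.inr u') hwu hcol
  obtain ⟨q₁, rfl⟩ : ∃ q₁, u₁ = Sum.inr q₁ := by
    cases u₁ with
    | inl s => exact absurd ⟨Sum.inl s, ⟨s, rfl⟩, hu₁adj⟩ hinner.2
    | inr q => exact ⟨q, rfl⟩
  have du'q₁ : gdist G x (Sum.inr u') (Sum.inr q₁) ≤ 0 :=
    le_of_le_of_eq (gdist_le_wt hu₁adj) (wt_inr_inr _ _)
  have hvq₁ : gdist G x (Sum.inl v) (Sum.inr q₁) ≤ gdist G x (Sum.inl v) (Sum.inr u') := by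
    refine le_trans (gdist_triangle _ (Sum.inr u') _) ?_
    refine le_trans (add_le_add (le_refl _) du'q₁) ?_
    rw [add_zero]
  have hvq₁r : gdist G x (Sum.inl v) (Sum.inr q₁) ≤ (r : ℝ≥0∞) := le_trans hvq₁ hball'
  -- the three outer vertices at v
  obtain ⟨c1, c2, c3, h12, h13, h23, hNset⟩ := Set.ncard_eq_three.mp (hreg v)
  have hadj1 : G.Adj v c1 := by
    have : c1 ∈ G.neighborSet v := by rw [hNset]; simp
    exact this
  have hadj2 : G.Adj v c2 := by
    have : c2 ∈ G.neighborSet v := by rw [hNset]; simp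
    exact this
  have hadj3 : G.Adj v c3 := by
    have : c3 ∈ G.neighborSet v := by rw [hNset]; simp
    exact this
  have hx1 : 0 < x s(v, c1) := hpos _ (G.mem_edgeSet.mpr hadj1)
  have hx2 : 0 < x s(v, c2) := hpos _ (G.mem_edgeSet.mpr hadj2)
  have hx3 : 0 < x s(v, c3) := hpos _ (G.mem_edgeSet.mpr hadj3)
  set O1 : OuterAt G x v := mkOuter v c1 hadj1 hx1 with hO1
  set O2 : OuterAt G x v := mkOuter v c2 hadj2 hx2 with hO2
  set O3 : OuterAt G x v := mkOuter v c3 hadj3 hx3 with hO3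
  have dO12 : O1.o ≠ O2.o := mkOuter_o_ne h12 hadj1 hx1 hadj2 hx2
  have dO13 : O1.o ≠ O3.o := mkOuter_o_ne h13 hadj1 hx1 hadj3 hx3
  have dO23 : O2.o ≠ O3.o := mkOuter_o_ne h23 hadj2 hx2 hadj3 hx3
  -- the triangle at q₁
  obtain ⟨t1, t2, t3, hexact, ht13, ht23, ht12, hadjt⟩ := gadget_triangle q₁
  have hq₁t1 : (gadgetGraph G x).Adj (Sum.inr q₁) (Sum.inr t1) :=
    (hexact _).mpr (Or.inl rfl)
  have dvt1 : gdist G x (Sum.inl v) (Sum.inr t1) ≤ gdist G x (Sum.inl v) (Sum.inr u') := by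
    refine le_trans (gdist_triangle _ (Sum.inr q₁) _) ?_
    refine le_trans (add_le_add hvq₁ (le_of_le_of_eq (gdist_le_wt hq₁t1) (wt_inr_inr _ _))) ?_
    rw [add_zero]
  have hbt : ∀ O : OuterAt G x v, gdist G x (Sum.inr t1) (Sum.inr O.o) ≤ (r : ℝ≥0∞) := by
    intro O
    refine le_trans (gdist_triangle _ (Sum.inl v) _) ?_
    refine le_trans (add_le_add ?_
      (le_of_le_of_eq (gdist_le_wt O.adj) (wt_half' _ _))) hslack
    rw [gdist_symm]
    exact dvt1
  -- neighbours of q₁ colored like the outer vertices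
  obtain ⟨m1, hm1adj, hm1col⟩ := hχc (Sum.inl v) (Sum.inr O1.o) O1.adj (Sum.inr q₁) hvq₁r hu₁col
  obtain ⟨m2, hm2adj, hm2col⟩ := hχc (Sum.inl v) (Sum.inr O2.o) O2.adj (Sum.inr q₁) hvq₁r hu₁col
  obtain ⟨m3, hm3adj, hm3col⟩ := hχc (Sum.inl v) (Sum.inr O3.o) O3.adj (Sum.inr q₁) hvq₁r hu₁col
  have hdO : ∀ O O' : OuterAt G x v, O.o ≠ O'.o → χ (Sum.inr O.o) ≠ χ (Sum.inr O'.o) :=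
    fun O O' hne he => hne (Sum.inr.inj (inj_adj_adj hχ2 O.adj O'.adj he))
  have dm12 : m1 ≠ m2 := fun h => hdO O1 O2 dO12 (by rw [← hm1col, ← hm2col, h])
  have dm13 : m1 ≠ m3 := fun h => hdO O1 O3 dO13 (by rw [← hm1col, ← hm3col, h])
  have dm23 : m2 ≠ m3 := fun h => hdO O2 O3 dO23 (by rw [← hm2col, ← hm3col, h])
  have hm1mem := (hexact m1).mp hm1adj
  have hm2mem := (hexact m2).mp hm2adj
  have hm3mem := (hexact m3).mp hm3adj
  have hp1 : Sum.inr t1 = m1 ∨ Sum.inr t1 = m2 ∨ Sum.inr t1 = m3 :=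
    pigeon hm1mem hm2mem hm3mem dm12 dm13 dm23
  have hp2 : Sum.inr t2 = m1 ∨ Sum.inr t2 = m2 ∨ Sum.inr t2 = m3 :=
    pigeon' hm1mem hm2mem hm3mem dm12 dm13 dm23
  have run : ∀ X Y Z : OuterAt G x v, X.o ≠ Y.o → X.o ≠ Z.o → Y.o ≠ Z.o →
      χ (Sum.inr t1) = χ (Sum.inr X.o) → χ (Sum.inr t2) = χ (Sum.inr Y.o) → False :=
    fun X Y Z dxy dxz dyz hc1 hc2 =>
      kill hr1 hχ2 hχc X.o Y.o Z.o X.frame X.adj Y.adj Z.adj dxy dxz dyz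
        (Sum.inr t1) (Sum.inr t2) hadjt hc1 hc2 (hbt X)
  rcases hp1 with e1 | e1 | e1 <;> rcases hp2 with e2 | e2 | e2
  · exact ht12 (Sum.inr.inj (e1.trans e2.symm))
  · exact run O1 O2 O3 dO12 dO13 dO23 (by rw [e1]; exact hm1col) (by rw [e2]; exact hm2col)
  · exact run O1 O3 O2 dO13 dO12 dO23.symm (by rw [e1]; exact hm1col) (by rw [e2]; exact hm3col)
  · exact run O2 O1 O3 dO12.symm dO23 dO13 (by rw [e1]; exact hm2col) (by rw [e2]; exact hm1col)
  · exact ht12 (Sum.inr.inj (e1.trans e2.symm))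
  · exact run O2 O3 O1 dO23 dO12.symm dO13.symm (by rw [e1]; exact hm2col) (by rw [e2]; exact hm3col)
  · exact run O3 O1 O2 dO13.symm dO23.symm dO12 (by rw [e1]; exact hm3col) (by rw [e2]; exact hm1col)
  · exact run O3 O2 O1 dO23.symm dO13.symm dO12.symm (by rw [e1]; exact hm3col) (by rw [e2]; exact hm2col)
  · exact ht12 (Sum.inr.inj (e1.trans e2.symm))

end LCLGadgetThms

namespace LCLGadgetThms
open LCLGadget

variable {V : Type} [LinearOrder V]

theorem stmt4 (G : SimpleGraph V) (x : Sym2 V → ℕ) (r : ℕ) (hr : 0 < r)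
    (hgad : CorrectlyGadgeted G x r)
    (χ : GadgetVert G x → ℕ)
    (hχ2 : Dist2Coloring G x χ)
    (hχc : EdgeConsistent G x r χ)
    (v : V) (w : GadgetVert G x) (hwout : IsOuter G x w)
    (hwadj : (gadgetGraph G x).Adj (Sum.inl v) w) :
    ∀ u : GadgetVert G x, inGball G x r (Sum.inl v) u → IsInner G x u →
      χ u ≠ χ w := by
  exact aux_stmt4 G x r hr hgad χ hχ2 hχc v w hwout hwadj

end LCLGadgetThms
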